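/- For every nonnegative integer M and every positive integer N there exist a finite connected multigraph (V, E, o, t, inv) with Betti number β = #E/2 − #V + 1, a 1-form x : E → ℝ^N whose set of fluxes along all closed walks equals ℤ^N, and a 1-form α : E → ℝ, such that β − I = M and β − I_α = N, where I = min{(1/2)·#supp b : b ∈ F(x)} and I_α = min{(1/2)·#supp b : b ∈ F(α)}. (Paper: Proposition 2.2(iii): the differences between the Betti number and the invariants I and I_α can be arbitrarily prescribed; stated on the fundamental graph, where the periodic graph corresponds to the pair (multigraph, 1-form x with flux image ℤ^N).) -/

import Mathlib

open scoped Classical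
open Finset

noncomputable section

/-- The degree of a vertex: the number of oriented edges starting at it. -/
def mdeg {V E : Type} [Fintype E] (o : E → V) (v : V) : ℕ :=
  (Finset.univ.filter fun e => o e = v).card

/-- The combinatorial magnetic Laplacian `Δ_α`. -/
def magLap {V E : Type} [Fintype E] (o t : E → V) (α : E → ℝ)
    (f : V → ℂ) (v : V) : ℂ :=
  ∑ e ∈ Finset.univ.filter (fun e => o e = v),
    (f v - Complex.exp (Complex.I * (α e : ℂ)) * f (t e))

/-- The fiber magnetic Laplacian `Δ_{m,φ}(θ)`. -/
def fiberLap {V E : Type} [Fintype E] {d : ℕ} (o t : E → V)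
    (m : E → Fin d → ℝ) (φ : E → ℝ) (θ : Fin d → ℝ) (f : V → ℂ) (v : V) : ℂ :=
  (mdeg o v : ℂ) * f v -
    ∑ e ∈ Finset.univ.filter (fun e => o e = v),
      Complex.exp (Complex.I * ((φ e + ∑ i, m e i * θ i : ℝ) : ℂ)) * f (t e)

/-- Standard inner product on `ℂ^V` (conjugate-linear in the first argument). -/
def dotC {V : Type} [Fintype V] (f g : V → ℂ) : ℂ :=
  ∑ v, (starRingEnd ℂ) (f v) * g v

/-- `lam` lists the eigenvalues of the operator `T` on `ℂ^V` in nondecreasing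
order, counted with multiplicity (witnessed by an orthonormal eigenbasis). -/
def IsEigList {V : Type} [Fintype V] (T : (V → ℂ) → (V → ℂ))
    (lam : Fin (Fintype.card V) → ℝ) : Prop :=
  Monotone lam ∧ ∃ u : Fin (Fintype.card V) → (V → ℂ),
    (∀ i j, dotC (u i) (u j) = if i = j then (1 : ℂ) else 0) ∧
    ∀ i, T (u i) = fun v => ((lam i : ℝ) : ℂ) * u i v

/-- A closed walk in the multigraph. -/
def IsClosedWalk {V E : Type} (o t : E → V) {k : ℕ} (c : Fin (k + 1) → E) : Prop :=
  (∀ i : Fin k, t (c i.castSucc) = o (c i.succ)) ∧ t (c (Fin.last k)) = o (c 0)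

/-- Two forms have the same flux along every closed walk. -/
def SameFlux {V E W : Type} [AddCommMonoid W] (o t : E → V) (b b' : E → W) : Prop :=
  ∀ (k : ℕ) (c : Fin (k + 1) → E), IsClosedWalk o t c →
    ∑ i, b (c i) = ∑ i, b' (c i)

/-- Connectivity of the multigraph: any two distinct vertices are the endpoints
of some walk. -/
def MGConnected {V E : Type} (o t : E → V) : Prop :=
  ∀ u v : V, u ≠ v → ∃ (k : ℕ) (c : Fin (k + 1) → E),
    (∀ i : Fin k, t (c i.castSucc) = o (c i.succ)) ∧ o (c 0) = u ∧ t (c (Fin.last k)) = v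

/-- The set of fluxes of a form along all closed walks. -/
def fluxSet {V E W : Type} [AddCommMonoid W] (o t : E → V) (b : E → W) : Set W :=
  {w | ∃ (k : ℕ) (c : Fin (k + 1) → E), IsClosedWalk o t c ∧ ∑ i, b (c i) = w}

/-- The number of oriented edges in the support of a form. -/
def suppCard {E : Type} [Fintype E] {W : Type} [Zero W] (b : E → W) : ℕ :=
  (Finset.univ.filter fun e => b e ≠ 0).card

/-- The integer lattice `ℤ^d` inside `ℝ^d`. -/
def intLattice (d : ℕ) : Set (Fin d → ℝ) :=
  {w | ∀ i, ∃ z : ℤ, w i = (z : ℝ)}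


section AuxGap
variable (M N : ℕ)

def invA : Fin (2 * (M + N)) → Fin (2 * (M + N)) := fun e =>
  if h : (e : ℕ) < M + N then ⟨(e : ℕ) + (M + N), by omega⟩
  else ⟨(e : ℕ) - (M + N), by have := e.isLt; omega⟩

def xZA : Fin (2 * (M + N)) → Fin N → ℤ := fun e i =>
  if (e : ℕ) = (i : ℕ) then 1 else if (e : ℕ) = (i : ℕ) + (M + N) then -1 else 0

def xA : Fin (2 * (M + N)) → Fin N → ℝ := fun e i => ((xZA M N e i : ℤ) : ℝ)

def aA : Fin (2 * (M + N)) → ℝ := fun e =>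
  if N ≤ (e : ℕ) ∧ (e : ℕ) < M + N then 1
  else if M + N + N ≤ (e : ℕ) then -1 else 0

lemma invA_val (e : Fin (2 * (M + N))) :
    ((invA M N e : Fin (2 * (M + N))) : ℕ)
      = if (e : ℕ) < M + N then (e : ℕ) + (M + N) else (e : ℕ) - (M + N) := by
  unfold invA; split <;> simp_all

lemma invA_ne (e : Fin (2 * (M + N))) (_hMN : 0 < M + N) : invA M N e ≠ e := by
  have h := invA_val M N e
  have := e.isLt
  intro hc
  rw [hc] at h
  split at h <;> omega

lemma invA_invA (e : Fin (2 * (M + N))) : invA M N (invA M N e) = e := by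
  have he := e.isLt
  apply Fin.ext
  rcases lt_or_ge (e : ℕ) (M + N) with hlt | hge
  · have h1 : ((invA M N e : Fin (2 * (M + N))) : ℕ) = (e : ℕ) + (M + N) := by
      rw [invA_val, if_pos hlt]
    rw [invA_val, h1, if_neg (by omega)]
    omega
  · have h1 : ((invA M N e : Fin (2 * (M + N))) : ℕ) = (e : ℕ) - (M + N) := by
      rw [invA_val, if_neg (by omega)]
    rw [invA_val, h1, if_pos (by omega)]
    omega

lemma xZA_invA (e : Fin (2 * (M + N))) (i : Fin N) :
    xZA M N (invA M N e) i = - xZA M N e i := by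
  have h := invA_val M N e
  have he := e.isLt
  have hi := i.isLt
  unfold xZA
  rcases lt_or_ge (e : ℕ) (M + N) with hlt | hge
  · rw [if_pos hlt] at h
    rw [h]
    split_ifs <;> omega
  · rw [if_neg (by omega)] at h
    rw [h]
    split_ifs <;> omega

lemma xA_invA (e : Fin (2 * (M + N))) : xA M N (invA M N e) = - xA M N e := by
  funext i
  simp [xA, xZA_invA]

lemma aA_invA (e : Fin (2 * (M + N))) : aA M N (invA M N e) = - aA M N e := by
  have h := invA_val M N e
  have he := e.isLt
  unfold aA
  rcases lt_or_ge (e : ℕ) (M + N) with hlt | hge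
  · rw [if_pos hlt] at h
    rw [h]
    split_ifs <;> (try norm_num) <;> omega
  · rw [if_neg (by omega)] at h
    rw [h]
    split_ifs <;> (try norm_num) <;> omega

def eposA (i : Fin N) : Fin (2 * (M + N)) := ⟨(i : ℕ), by have := i.isLt; omega⟩

def enegA (i : Fin N) : Fin (2 * (M + N)) := ⟨(i : ℕ) + (M + N), by have := i.isLt; omega⟩

lemma xZA_eposA (i j : Fin N) : xZA M N (eposA M N i) j = if i = j then 1 else 0 := by
  have hi := i.isLt
  have hj := j.isLt
  unfold xZA eposA
  simp only [Fin.ext_iff]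
  split_ifs <;> omega

lemma xZA_enegA (i j : Fin N) : xZA M N (enegA M N i) j = if i = j then -1 else 0 := by
  have hi := i.isLt
  have hj := j.isLt
  unfold xZA enegA
  simp only [Fin.ext_iff]
  split_ifs <;> omega

/-- build a list of edges achieving prescribed integer flux -/
lemma exists_list_flux (hN : 0 < N) (n : ℕ) :
    ∀ z : Fin N → ℤ, (∑ i, (z i).natAbs) = n →
    ∃ L : List (Fin (2 * (M + N))), L ≠ [] ∧
      ∀ j : Fin N, (L.map fun e => xZA M N e j).sum = z j := by
  induction n using Nat.strong_induction_on with
  | _ n ih =>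
    intro z hz
    rcases Nat.eq_zero_or_pos n with h0 | hpos
    · have hz0 : ∀ i, z i = 0 := by
        intro i
        have : (z i).natAbs = 0 := by
          have := Finset.sum_eq_zero_iff.mp (h0 ▸ hz) i (Finset.mem_univ i)
          omega
        omega
      refine ⟨[eposA M N ⟨0, hN⟩, enegA M N ⟨0, hN⟩], by simp, ?_⟩
      intro j
      simp only [List.map_cons, List.map_nil, List.sum_cons, List.sum_nil,
        xZA_eposA, xZA_enegA, hz0 j]
      split_ifs <;> omega
    · have : ∃ i, z i ≠ 0 := by
        by_contra hc
        push_neg at hc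
        have : (∑ i, (z i).natAbs) = 0 := Finset.sum_eq_zero (fun i _ => by
          rw [hc i]; rfl)
        omega
      obtain ⟨i, hi⟩ := this
      set z' : Fin N → ℤ := Function.update z i (z i - Int.sign (z i)) with hz'
      have hzi : (z i - Int.sign (z i)).natAbs = (z i).natAbs - 1 := by
        rcases lt_trichotomy (z i) 0 with h | h | h
        · rw [Int.sign_eq_neg_one_of_neg h]; omega
        · exact absurd h hi
        · rw [Int.sign_eq_one_of_pos h]; omega
      have h1 : 1 ≤ (z i).natAbs := by omega
      have he : ∑ k ∈ Finset.univ.erase i, (z' k).natAbs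
          = ∑ k ∈ Finset.univ.erase i, (z k).natAbs :=
        Finset.sum_congr rfl fun k hk => by
          rw [hz', Function.update_of_ne (Finset.ne_of_mem_erase hk)]
      have ha : (∑ k ∈ Finset.univ.erase i, (z' k).natAbs) + (z' i).natAbs
          = ∑ k, (z' k).natAbs :=
        Finset.sum_erase_add Finset.univ (fun k => (z' k).natAbs) (Finset.mem_univ i)
      have hb : (∑ k ∈ Finset.univ.erase i, (z k).natAbs) + (z i).natAbs
          = ∑ k, (z k).natAbs :=
        Finset.sum_erase_add Finset.univ (fun k => (z k).natAbs) (Finset.mem_univ i)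
      have hz'i : (z' i).natAbs = (z i).natAbs - 1 := by
        rw [hz', Function.update_self]; exact hzi
      have hsum : (∑ k, (z' k).natAbs) = n - 1 := by omega
      obtain ⟨L, hL, hLs⟩ := ih (n - 1) (by omega) z' hsum
      refine ⟨(if 0 < z i then eposA M N i else enegA M N i) :: L, by simp, ?_⟩
      intro j
      rw [List.map_cons, List.sum_cons, hLs j, hz']
      rcases lt_trichotomy (z i) 0 with h | h | h
      · rw [if_neg (by omega), xZA_enegA, Int.sign_eq_neg_one_of_neg h]
        rcases eq_or_ne i j with rfl | hij
        · simp [Function.update_self]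
        · simp [Function.update_of_ne (Ne.symm hij) _ z, hij]
      · exact absurd h hi
      · rw [if_pos h, xZA_eposA, Int.sign_eq_one_of_pos h]
        rcases eq_or_ne i j with rfl | hij
        · simp [Function.update_self]
        · simp [Function.update_of_ne (Ne.symm hij) _ z, hij]

end AuxGap

/-- On a one-vertex graph, same flux forces equality. -/
lemma flux_force {E W : Type} [AddCommMonoid W] {o t : E → Fin 1} {b b' : E → W}
    (h : SameFlux o t b b') (e : E) : b e = b' e := by
  have hw : IsClosedWalk o t (fun _ : Fin 1 => e) :=
    ⟨fun i => i.elim0, Subsingleton.elim _ _⟩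
  have := h 0 (fun _ => e) hw
  simpa using this

lemma suppCard_eq_of_mem_iff {n : ℕ} {W : Type} [Zero W] (b : Fin n → W)
    (s : Finset ℕ) (hs : ∀ m ∈ s, m < n)
    (h : ∀ e : Fin n, b e ≠ 0 ↔ (e : ℕ) ∈ s) : suppCard b = s.card := by
  rw [suppCard, ← Finset.card_attachFin s hs]
  congr 1
  ext e
  simp [Finset.mem_attachFin, h e]
/-- For every `M ≥ 0` and `N > 0` there are a finite connected multigraph, a
1-form `x : E → ℝ^N` with flux set `ℤ^N`, and a 1-form `α : E → ℝ`, such that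
`β − I = M` and `β − I_α = N`, where `β = #E/2 − #V + 1` is the Betti number,
`I = min {(1/2)·#supp b : b ∈ F(x)}` and `I_α = min {(1/2)·#supp b : b ∈ F(α)}`
(witnessed below by minimal forms `μ ∈ F(x)` and `φ ∈ F(α)`). -/
theorem exists_graph_with_prescribed_invariant_gaps (M N : ℕ) (hN : 0 < N) :
    ∃ (nv ne : ℕ) (o t : Fin ne → Fin nv) (inv : Fin ne → Fin ne),
      0 < nv ∧
      (∀ e, inv e ≠ e) ∧ (∀ e, inv (inv e) = e) ∧
      (∀ e, o (inv e) = t e) ∧ (∀ e, t (inv e) = o e) ∧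
      MGConnected o t ∧
      ∃ (x : Fin ne → Fin N → ℝ) (α : Fin ne → ℝ),
        (∀ e, x (inv e) = - x e) ∧ (∀ e, α (inv e) = - α e) ∧
        fluxSet o t x = intLattice N ∧
        ∃ (μ : Fin ne → Fin N → ℝ) (φ : Fin ne → ℝ),
          (∀ e, μ (inv e) = - μ e) ∧ SameFlux o t x μ ∧
          (∀ b : Fin ne → Fin N → ℝ, (∀ e, b (inv e) = - b e) → SameFlux o t x b →
            suppCard μ ≤ suppCard b) ∧
          (∀ e, φ (inv e) = - φ e) ∧ SameFlux o t α φ ∧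
          (∀ b : Fin ne → ℝ, (∀ e, b (inv e) = - b e) → SameFlux o t α b →
            suppCard φ ≤ suppCard b) ∧
          (suppCard μ : ℤ) = (ne : ℤ) - 2 * nv + 2 - 2 * M ∧
          (suppCard φ : ℤ) = (ne : ℤ) - 2 * nv + 2 - 2 * N := by
  refine ⟨1, 2 * (M + N), fun _ => 0, fun _ => 0, invA M N, Nat.one_pos,
    fun e => invA_ne M N e (by omega), invA_invA M N, fun _ => rfl, fun _ => rfl,
    fun u v huv => absurd (Subsingleton.elim u v) huv,
    xA M N, aA M N, xA_invA M N, aA_invA M N, ?_,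
    xA M N, aA M N, xA_invA M N, (fun _ _ _ => rfl), ?_,
    aA_invA M N, (fun _ _ _ => rfl), ?_, ?_, ?_⟩
  · -- fluxSet = intLattice
    ext w
    constructor
    · rintro ⟨k, c, -, rfl⟩
      intro i
      refine ⟨∑ j, xZA M N (c j) i, ?_⟩
      rw [Finset.sum_apply]
      push_cast [xA]
      rfl
    · intro hw
      choose z hz using hw
      obtain ⟨L, hL, hLs⟩ := exists_list_flux M N hN (∑ i, (z i).natAbs) z rfl
      have hlen : L.length - 1 + 1 = L.length := by
        cases L with
        | nil => exact absurd rfl hL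
        | cons a l => simp
      refine ⟨L.length - 1, fun i => L.get (Fin.cast hlen i),
        ⟨fun i => Subsingleton.elim _ _, Subsingleton.elim _ _⟩, ?_⟩
      funext j
      rw [Finset.sum_apply]
      have h1 : ∑ i : Fin (L.length - 1 + 1), (fun i' : Fin L.length => xA M N (L.get i') j) (Fin.cast hlen i)
          = ∑ i : Fin L.length, xA M N (L.get i) j :=
        Fin.sum_congr' (fun i' : Fin L.length => xA M N (L.get i') j) hlen
      have h2 : ∑ i : Fin L.length, xA M N (L.get i) j
          = (L.map fun e => xA M N e j).sum := by
        rw [← List.ofFn_getElem_eq_map]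
        exact List.sum_ofFn.symm
      have h3 : (L.map fun e => xA M N e j).sum
          = (((L.map fun e => xZA M N e j).sum : ℤ) : ℝ) := by
        unfold xA
        rw [Int.cast_list_sum, List.map_map]
        rfl
      rw [show (fun i : Fin (L.length - 1 + 1) => xA M N (L.get (Fin.cast hlen i)) j)
        = fun i => (fun i' : Fin L.length => xA M N (L.get i') j) (Fin.cast hlen i) from rfl] at *
      rw [h1, h2, h3, hLs j, hz j]
  · -- minimality for x
    intro b _ hbf
    have : b = xA M N := funext fun e => (flux_force hbf e).symm
    rw [this]
  · -- minimality for α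
    intro b _ hbf
    have : b = aA M N := funext fun e => (flux_force hbf e).symm
    rw [this]
  · -- suppCard μ
    have hcard : suppCard (xA M N)
        = ((Finset.range N) ∪ Finset.Ico (M + N) (M + N + N)).card := by
      apply suppCard_eq_of_mem_iff
      · intro m hm
        simp only [Finset.mem_union, Finset.mem_range, Finset.mem_Ico] at hm
        omega
      · intro e
        have he := e.isLt
        simp only [Finset.mem_union, Finset.mem_range, Finset.mem_Ico]
        constructor
        · intro h
          by_contra hc
          apply h
          funext j
          have hj := j.isLt
          simp only [xA, xZA, Pi.zero_apply]
          rw [if_neg (by omega), if_neg (by omega)]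
          norm_num
        · rintro (h | h)
          · intro hc
            have := congrFun hc ⟨(e : ℕ), h⟩
            simp only [xA, xZA, Pi.zero_apply] at this
            simp at this
          · intro hc
            have := congrFun hc ⟨(e : ℕ) - (M + N), by omega⟩
            simp only [xA, xZA, Pi.zero_apply] at this
            rw [if_neg (by omega), if_pos (by omega)] at this
            norm_num at this
    rw [hcard, Finset.card_union_of_disjoint (by
      simp only [Finset.disjoint_left, Finset.mem_range, Finset.mem_Ico]
      intro a ha hb
      omega)]
    rw [Finset.card_range, Nat.card_Ico]
    omega
  · -- suppCard φ
    have hcard : suppCard (aA M N)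
        = ((Finset.Ico N (M + N)) ∪ Finset.Ico (M + N + N) (2 * (M + N))).card := by
      apply suppCard_eq_of_mem_iff
      · intro m hm
        simp only [Finset.mem_union, Finset.mem_Ico] at hm
        omega
      · intro e
        have he := e.isLt
        simp only [Finset.mem_union, Finset.mem_Ico, aA]
        split_ifs with h1 h2
        · simp only [ne_eq, one_ne_zero, not_false_eq_true, true_iff]
          omega
        · simp only [ne_eq, neg_eq_zero, one_ne_zero, not_false_eq_true, true_iff]
          omega
        · simp only [ne_eq, not_true_eq_false, false_iff, not_or, not_and, not_le]
          omega
    rw [hcard, Finset.card_union_of_disjoint (by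
      simp only [Finset.disjoint_left, Finset.mem_Ico]
      intro a ha hb
      omega)]
    rw [Nat.card_Ico, Nat.card_Ico]
    omega
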